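/- Commutation of Hasse derivatives with q-th powers (Proposition on divided derivatives, part (4)): for every polynomial f ∈ R[X] and every integer n ≥ 1, D_n(f^q) = 0 if q does not divide n, and D_n(f^q) = (D_{n/q}(f))^q if q divides n. -/

import Mathlib

open Polynomial Nat

/-- Lucas-type congruence for prime powers: `choose n k ≡
`choose (n % p^e) (k % p^e) * choose (n / p^e) (k / p^e)` mod `p`. -/
private lemma lucas_pow_aux {p : ℕ} (hp : p.Prime) (e : ℕ) :
    ∀ n k : ℕ, n.choose k ≡ (n % p ^ e).choose (k % p ^ e) *
      ((n / p ^ e).choose (k / p ^ e)) [MOD p] := by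
  haveI : Fact p.Prime := ⟨hp⟩
  induction e with
  | zero => intro n k; simpa [Nat.mod_one] using Nat.ModEq.refl (n.choose k)
  | succ e ih =>
    intro n k
    have h1 : n.choose k ≡ (n % p).choose (k % p) * ((n / p).choose (k / p)) [MOD p] :=
      Choose.choose_modEq_choose_mod_mul_choose_div_nat
    have h2 := (ih (n / p) (k / p)).mul_left ((n % p).choose (k % p))
    refine (h1.trans h2).trans ?_
    have h3 : (n % p ^ (e + 1)).choose (k % p ^ (e + 1)) ≡
        ((n % p ^ (e + 1)) % p).choose ((k % p ^ (e + 1)) % p) *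
        (((n % p ^ (e + 1)) / p).choose ((k % p ^ (e + 1)) / p)) [MOD p] :=
      Choose.choose_modEq_choose_mod_mul_choose_div_nat
    have e1 : ∀ m : ℕ, m % p ^ (e + 1) % p = m % p := fun m =>
      Nat.mod_mod_of_dvd m (dvd_pow_self p (Nat.succ_ne_zero e))
    have e2 : ∀ m : ℕ, m % p ^ (e + 1) / p = m / p % p ^ e := fun m => by
      rw [_root_.pow_succ', Nat.mod_mul_right_div_self]
    have e3 : ∀ m : ℕ, m / p / p ^ e = m / p ^ (e + 1) := fun m => by
      rw [Nat.div_div_eq_div_mul, ← _root_.pow_succ']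
    rw [e1, e1, e2, e2] at h3
    calc (n % p).choose (k % p) *
          ((n / p % p ^ e).choose (k / p % p ^ e) * (n / p / p ^ e).choose (k / p / p ^ e))
        = ((n % p).choose (k % p) * (n / p % p ^ e).choose (k / p % p ^ e)) *
          (n / p ^ (e + 1)).choose (k / p ^ (e + 1)) := by rw [e3, e3, mul_assoc]
      _ ≡ (n % p ^ (e + 1)).choose (k % p ^ (e + 1)) *
          (n / p ^ (e + 1)).choose (k / p ^ (e + 1)) [MOD p] := h3.symm.mul_right _

/-- Coefficients of a `p^e`-th power in characteristic `p`. -/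
private lemma coeff_pow_q {R : Type*} [CommRing R] (p e : ℕ) [CharP R p] (hp : p.Prime)
    (g : Polynomial R) (m : ℕ) :
    (g ^ p ^ e).coeff m = if p ^ e ∣ m then g.coeff (m / p ^ e) ^ p ^ e else 0 := by
  haveI : Fact p.Prime := ⟨hp⟩
  haveI : ExpChar R p := ExpChar.prime hp
  have hq : 0 < p ^ e := pow_pos hp.pos e
  rw [← Polynomial.map_iterateFrobenius_expand p g e, Polynomial.coeff_map,
    Polynomial.coeff_expand hq]
  split
  · show (iterateFrobenius R p e) _ = _
    rw [iterateFrobenius_def]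
  · exact map_zero _

/-- Commutation of Hasse (divided) derivatives with `q`-th powers in characteristic `p`:
`D_n(f^q) = 0` if `q ∤ n`, and `D_n(f^q) = (D_{n/q} f)^q` if `q ∣ n`. -/
theorem stmt_16 {R : Type*} [CommRing R] (p q e : ℕ) [CharP R p] (hp : p.Prime)
    (he : 0 < e) (hq : q = p ^ e) (f : Polynomial R) (n : ℕ) (hn : 1 ≤ n) :
    (¬ q ∣ n → Polynomial.hasseDeriv n (f ^ q) = 0) ∧
      (q ∣ n → Polynomial.hasseDeriv n (f ^ q) = Polynomial.hasseDeriv (n / q) f ^ q) := by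
  subst hq
  set q := p ^ e with hq
  have hq0 : 0 < q := pow_pos hp.pos e
  have hcast : ∀ a b : ℕ, a ≡ b [MOD p] → (a : R) = b := fun a b h =>
    (CharP.natCast_eq_natCast R p).mpr h
  constructor
  · intro hdvd
    ext m
    rw [Polynomial.hasseDeriv_coeff, coeff_pow_q p e hp, Polynomial.coeff_zero]
    split
    · rename_i h
      have : ((m + n).choose n : R) = 0 := by
        have hl := lucas_pow_aux hp e (m + n) n
        rw [Nat.dvd_iff_mod_eq_zero.mp h] at hl
        have : n % q ≠ 0 := fun hc => hdvd (Nat.dvd_iff_mod_eq_zero.mpr hc)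
        rw [Nat.choose_eq_zero_of_lt (Nat.pos_of_ne_zero this), zero_mul] at hl
        rw [hcast _ 0 hl, Nat.cast_zero]
      rw [this, zero_mul]
    · rw [mul_zero]
  · intro hdvd
    obtain ⟨b, hb⟩ := hdvd
    ext m
    rw [Polynomial.hasseDeriv_coeff, coeff_pow_q p e hp, coeff_pow_q p e hp]
    by_cases hm : q ∣ m
    · obtain ⟨a, ha⟩ := hm
      have hmn : q ∣ m + n := ⟨a + b, by rw [ha, hb, mul_add]⟩
      rw [if_pos hmn, if_pos ⟨a, ha⟩, Polynomial.hasseDeriv_coeff]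
      have hd1 : (m + n) / q = a + b := by
        rw [ha, hb, ← mul_add, Nat.mul_div_cancel_left _ hq0]
      have hd2 : m / q = a := by rw [ha, Nat.mul_div_cancel_left _ hq0]
      have hd3 : n / q = b := by rw [hb, Nat.mul_div_cancel_left _ hq0]
      rw [hd1, hd2, hd3, mul_pow]
      congr 1
      -- `((m+n).choose n : R) = ((a+b).choose b : R) ^ q`
      have hl := lucas_pow_aux hp e (m + n) n
      rw [Nat.dvd_iff_mod_eq_zero.mp hmn, Nat.dvd_iff_mod_eq_zero.mp ⟨b, hb⟩,
        Nat.choose_self, one_mul, hd1, hd3] at hl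
      have hfermat : ((a + b).choose b) ^ q ≡ (a + b).choose b [MOD p] := by
        haveI : Fact p.Prime := ⟨hp⟩
        rw [← ZMod.natCast_eq_natCast_iff, Nat.cast_pow, hq, ZMod.pow_card_pow]
      rw [hcast _ _ hl, ← Nat.cast_pow, hcast _ _ hfermat]
    · have hmn : ¬ q ∣ m + n := fun hc => hm ((Nat.dvd_add_right ⟨b, hb⟩).mp
        (by rwa [add_comm] at hc))
      rw [if_neg hmn, if_neg hm, mul_zero]
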